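/- Let n : ℕ, let V : ℝⁿ → ℝⁿ be a C² vector field and f : ℝⁿ → ℝ a function, and suppose V is mixed Killing with mixed Killing factor f. Then for every p ∈ ℝⁿ: trace(fderiv ℝ (∇_V V) p) + Σ_{i} ‖DV(p) e_i‖² = f(p) · trace(DV(p)), where (e_i) is the standard orthonormal basis of ℝⁿ (so the middle term is the squared Hilbert–Schmidt norm of DV(p) and the first term is div(∇_V V)(p)). (This is the flat-space, Ric = 0 form of the paper's traced identity (e9).) -/

import Mathlib

open scoped RealInnerProductSpace

noncomputable section

/-- Euclidean space `ℝⁿ`. -/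
abbrev E (n : ℕ) := EuclideanSpace ℝ (Fin n)

/-- The field of symmetric operators representing the Lie derivative `L_V g` of the flat
metric: `A(p) = DV(p) + DV(p)*`. -/
def LieDerivOp {n : ℕ} (V : E n → E n) (p : E n) : E n →L[ℝ] E n :=
  fderiv ℝ V p + ContinuousLinearMap.adjoint (fderiv ℝ V p)

/-- The field of operators representing the second Lie derivative `L_V L_V g`:
`B(p) = (D_{V(p)} A) + A(p) ∘ DV(p) + DV(p)* ∘ A(p)`. -/
def LieDeriv2Op {n : ℕ} (V : E n → E n) (p : E n) : E n →L[ℝ] E n :=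
  fderiv ℝ (LieDerivOp V) p (V p)
    + (LieDerivOp V p).comp (fderiv ℝ V p)
    + (ContinuousLinearMap.adjoint (fderiv ℝ V p)).comp (LieDerivOp V p)

/-- `V` is a mixed Killing vector field with mixed Killing factor `f` if
`B(p) = f(p) • A(p)` for all `p`. -/
def IsMixedKilling {n : ℕ} (V : E n → E n) (f : E n → ℝ) : Prop :=
  ∀ p, LieDeriv2Op V p = f p • LieDerivOp V p

namespace MKaux
variable {n : ℕ}

/-- trace of a continuous linear endomorphism. -/
def trC (n : ℕ) : (E n →L[ℝ] E n) →ₗ[ℝ] ℝ :=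
  (LinearMap.trace ℝ (E n)).comp (ContinuousLinearMap.coeLM ℝ)

lemma trC_apply (T : E n →L[ℝ] E n) :
    trC n T = LinearMap.trace ℝ (E n) (T : E n →ₗ[ℝ] E n) := rfl

lemma trC_eq_sum_inner (T : E n →L[ℝ] E n) :
    trC n T
      = ∑ i : Fin n, ⟪(EuclideanSpace.single i 1 : E n), T (EuclideanSpace.single i 1)⟫ := by
  classical
  rw [trC_apply, LinearMap.trace_eq_matrix_trace ℝ (EuclideanSpace.basisFun (Fin n) ℝ).toBasis,
    Matrix.trace]
  refine Finset.sum_congr rfl fun i _ => ?_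
  rw [Matrix.diag_apply, LinearMap.toMatrix_apply,
    (EuclideanSpace.basisFun (Fin n) ℝ).coe_toBasis_repr_apply,
    (EuclideanSpace.basisFun (Fin n) ℝ).repr_apply_apply,
    OrthonormalBasis.coe_toBasis, EuclideanSpace.basisFun_apply]
  rfl

lemma trC_adjoint (T : E n →L[ℝ] E n) :
    trC n (ContinuousLinearMap.adjoint T) = trC n T := by
  rw [trC_eq_sum_inner, trC_eq_sum_inner]
  refine Finset.sum_congr rfl fun i _ => ?_
  rw [ContinuousLinearMap.adjoint_inner_right, real_inner_comm]

lemma trC_adjoint_comp (T S : E n →L[ℝ] E n) :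
    trC n ((ContinuousLinearMap.adjoint T).comp S)
      = ∑ i : Fin n, ⟪T (EuclideanSpace.single i 1), S (EuclideanSpace.single i 1)⟫ := by
  rw [trC_eq_sum_inner]
  refine Finset.sum_congr rfl fun i _ => ?_
  rw [ContinuousLinearMap.comp_apply, ContinuousLinearMap.adjoint_inner_right]

lemma trC_comp_comm (T S : E n →L[ℝ] E n) :
    trC n (T.comp S) = trC n (S.comp T) := by
  have := LinearMap.trace_mul_comm ℝ (T : E n →ₗ[ℝ] E n) (S : E n →ₗ[ℝ] E n)
  simpa [trC_apply, Module.End.mul_eq_comp] using this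

/-- the adjoint, as an `ℝ`-linear map. -/
def adjL (n : ℕ) : (E n →L[ℝ] E n) →ₗ[ℝ] (E n →L[ℝ] E n) where
  toFun T := ContinuousLinearMap.adjoint T
  map_add' T S := map_add _ T S
  map_smul' c T := by
    simp [LinearIsometryEquiv.map_smulₛₗ]

def adjCLM (n : ℕ) : (E n →L[ℝ] E n) →L[ℝ] (E n →L[ℝ] E n) :=
  LinearMap.toContinuousLinearMap (adjL n)

lemma adjCLM_apply (T : E n →L[ℝ] E n) :
    adjCLM n T = ContinuousLinearMap.adjoint T := rfl

end MKaux

open MKaux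

/-- the flat-space, Ricci-flat form of the traced identity (e9):
if `V` is mixed Killing with factor `f`, then
`div(∇_V V)(p) + ‖DV(p)‖²_HS = f(p) · div V(p)`. -/
theorem isMixedKilling_traced {n : ℕ} (V : E n → E n) (hV : ContDiff ℝ 2 V)
    (f : E n → ℝ) (hmk : IsMixedKilling V f) (p : E n) :
    LinearMap.trace ℝ (E n) (fderiv ℝ (fun q => fderiv ℝ V q (V q)) p : E n →ₗ[ℝ] E n)
        + ∑ i : Fin n, ‖fderiv ℝ V p (EuclideanSpace.single i 1)‖ ^ 2 =
      f p * LinearMap.trace ℝ (E n) (fderiv ℝ V p : E n →ₗ[ℝ] E n) := by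
  classical
  set D : E n → (E n →L[ℝ] E n) := fderiv ℝ V with hDdef
  have hVd : Differentiable ℝ V := hV.differentiable (by norm_num)
  have hD1 : ContDiff ℝ 1 D := hV.fderiv_right (le_refl _)
  have hDd : Differentiable ℝ D := hD1.differentiable (by norm_num)
  have hAd : Differentiable ℝ (LieDerivOp V) := by
    intro q
    have : LieDerivOp V = fun q => D q + adjCLM n (D q) := by
      funext r; rfl
    rw [this]
    exact ((hDd q).add (((adjCLM n).differentiable.differentiableAt).comp q (hDd q)))
  -- derivative of A
  have hfA : fderiv ℝ (LieDerivOp V) p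
      = fderiv ℝ D p + (adjCLM n).comp (fderiv ℝ D p) := by
    have h1 : LieDerivOp V = fun q => D q + (adjCLM n ∘ D) q := by
      funext r; rfl
    rw [h1, fderiv_fun_add (hDd p)
      (((adjCLM n).differentiable.differentiableAt).comp p (hDd p))]
    congr 1
    rw [fderiv_comp p ((adjCLM n).differentiable.differentiableAt) (hDd p),
      (adjCLM n).fderiv]
  -- HS norm notation
  set HS : ℝ := ∑ i : Fin n, ‖D p (EuclideanSpace.single i 1)‖ ^ 2 with hHS
  have hHSinner : trC n ((ContinuousLinearMap.adjoint (D p)).comp (D p)) = HS := by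
    rw [trC_adjoint_comp]
    exact Finset.sum_congr rfl fun i _ => real_inner_self_eq_norm_sq _
  -- traced mixed Killing identity
  have key := congrArg (trC n) (hmk p)
  rw [LieDeriv2Op] at key
  have hsecond : trC n (fderiv ℝ (LieDerivOp V) p (V p))
      = 2 * trC n (fderiv ℝ D p (V p)) := by
    rw [hfA]
    simp only [ContinuousLinearMap.add_apply, ContinuousLinearMap.comp_apply, map_add,
      adjCLM_apply, trC_adjoint]
    ring
  have hApD : trC n ((LieDerivOp V p).comp (D p))
      = trC n ((D p).comp (D p)) + HS := by
    rw [LieDerivOp, ContinuousLinearMap.add_comp, map_add, hHSinner]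
  have hDpA : trC n ((ContinuousLinearMap.adjoint (D p)).comp (LieDerivOp V p))
      = HS + trC n ((D p).comp (D p)) := by
    rw [LieDerivOp, ContinuousLinearMap.comp_add, map_add, hHSinner]
    congr 1
    calc trC n ((ContinuousLinearMap.adjoint (D p)).comp (ContinuousLinearMap.adjoint (D p)))
        = trC n (ContinuousLinearMap.adjoint ((D p).comp (D p))) := by
          rw [ContinuousLinearMap.adjoint_comp]
      _ = trC n ((D p).comp (D p)) := trC_adjoint _
  have hAtr : trC n (LieDerivOp V p) = 2 * trC n (D p) := by
    rw [LieDerivOp, map_add, trC_adjoint]; ring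
  rw [map_add, map_add, map_smul, hsecond, hApD, hDpA, hAtr, smul_eq_mul] at key
  -- derivative of ∇_V V
  have hsymm : IsSymmSndFDerivAt ℝ V p :=
    hV.contDiffAt.isSymmSndFDerivAt (by norm_num)
  have hflip : (fderiv ℝ D p).flip (V p) = fderiv ℝ D p (V p) := by
    refine ContinuousLinearMap.ext fun w => ?_
    simpa using hsymm w (V p)
  have hnab : fderiv ℝ (fun q => D q (V q)) p
      = (D p).comp (D p) + fderiv ℝ D p (V p) := by
    rw [fderiv_clm_apply (hDd p) (hVd p), hflip]
  have hgoal : trC n (fderiv ℝ (fun q => D q (V q)) p)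
      = trC n ((D p).comp (D p)) + trC n (fderiv ℝ D p (V p)) := by
    rw [hnab, map_add]
  show trC n (fderiv ℝ (fun q => D q (V q)) p) + HS = f p * trC n (D p)
  rw [hgoal]
  linarith [key]
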